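/- Let A = (a_{ij}) be an indecomposable symmetrizable generalized Cartan matrix of infinite type. Then there exist a real number ρ ≥ 2 and positive real numbers c₁,…,cₙ such that −∑_{i ≠ j} a_{ij} c_i = ρ·c_j for every j ∈ {1,…,n}; that is, (c₁,…,cₙ) is a strictly positive eigenvector of the transpose of the matrix A' = 2·Id − A, with eigenvalue ρ ≥ 2. -/

import Mathlib

/-! Statement 15 (Fomin–Zelevinsky, "Cluster algebras IV", Perron–Frobenius step in
the proof of Theorem 9.4): an indecomposable symmetrizable generalized Cartan matrix
of infinite type admits a positive eigenvector of A' = 2·Id − A (transposed) with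
eigenvalue ρ ≥ 2. -/

open scoped BigOperators

/-- If `A` is an indecomposable symmetrizable generalized Cartan
matrix of infinite type, then there are `ρ ≥ 2` and positive reals `c₁,…,cₙ` with
`−∑_{i ≠ j} a_{ij} cᵢ = ρ·cⱼ` for every `j`. -/
theorem exists_positive_eigenvector (n : ℕ)
    (A : Matrix (Fin n) (Fin n) ℤ)
    (hdiag : ∀ i, A i i = 2) (hoff : ∀ i j, i ≠ j → A i j ≤ 0)
    (d : Fin n → ℤ) (hd : ∀ i, 0 < d i)
    (hsym : ∀ i j, d i * A i j = d j * A j i)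
    (hind : (SimpleGraph.fromRel (fun i j => A i j ≠ 0)).Connected)
    (hinf : ¬ ∀ x : Fin n → ℚ, x ≠ 0 →
      0 < ∑ i, ∑ j, ((d i * A i j : ℤ) : ℚ) * x i * x j) :
    ∃ (ρ : ℝ) (c : Fin n → ℝ), 2 ≤ ρ ∧ (∀ i, 0 < c i) ∧
      ∀ j, -(∑ i ∈ Finset.univ.erase j, (A i j : ℝ) * c i) = ρ * c j := by
  classical
  have hne : Nonempty (Fin n) := hind.nonempty
  obtain ⟨i0⟩ := hne
  -- square roots of the symmetrizers
  set sd : Fin n → ℝ := fun i => Real.sqrt ((d i : ℝ)) with hsd_def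
  have hsd_pos : ∀ i, 0 < sd i := fun i => Real.sqrt_pos.mpr (by exact_mod_cast hd i)
  have hsd_sq : ∀ i, sd i * sd i = (d i : ℝ) := fun i =>
    Real.mul_self_sqrt (by exact_mod_cast (hd i).le)
  -- real symmetry of A
  have hsymR : ∀ i j, (d i : ℝ) * (A i j : ℝ) = (d j : ℝ) * (A j i : ℝ) := by
    intro i j; exact_mod_cast hsym i j
  -- A i j = 0 ↔ A j i = 0
  have hAzero : ∀ i j, A i j ≠ 0 → A j i ≠ 0 := by
    intro i j hij h0
    apply hij
    have := hsym j i
    rw [h0, mul_zero] at this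
    rcases mul_eq_zero.mp this.symm with h | h
    · exact absurd h (hd i).ne'
    · exact h
  -- the symmetrized nonnegative matrix
  set S : Matrix (Fin n) (Fin n) ℝ :=
    fun i j => if i = j then 0 else -(A i j : ℝ) * sd i / sd j with hS_def
  have hS_nonneg : ∀ i j, 0 ≤ S i j := by
    intro i j
    by_cases h : i = j
    · simp [hS_def, h]
    · simp only [hS_def, if_neg h]
      apply div_nonneg _ (hsd_pos j).le
      apply mul_nonneg _ (hsd_pos i).le
      have := hoff i j h
      simp only [neg_nonneg]
      exact_mod_cast this
  have hS_symm : ∀ i j, S i j = S j i := by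
    intro i j
    by_cases h : i = j
    · simp [hS_def, h]
    · simp only [hS_def, if_neg h, if_neg (Ne.symm h)]
      rw [div_eq_div_iff (hsd_pos j).ne' (hsd_pos i).ne']
      have : -(A i j : ℝ) * (sd i * sd i) = -(A j i : ℝ) * (sd j * sd j) := by
        rw [hsd_sq, hsd_sq]
        linarith [hsymR i j]
      calc -(A i j : ℝ) * sd i * sd i = -(A i j : ℝ) * (sd i * sd i) := by ring
        _ = -(A j i : ℝ) * (sd j * sd j) := this
        _ = -(A j i : ℝ) * sd j * sd j := by ring
  -- positivity of off-diagonal entries corresponding to edges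
  have hS_pos : ∀ i j, i ≠ j → A i j ≠ 0 → 0 < S i j := by
    intro i j h hne
    have h1 : (A i j : ℝ) < 0 :=
      lt_of_le_of_ne (by exact_mod_cast hoff i j h) (by exact_mod_cast hne)
    simp only [hS_def, if_neg h]
    apply div_pos _ (hsd_pos j)
    apply mul_pos _ (hsd_pos i)
    linarith
  -- S is Hermitian
  have hherm : S.IsHermitian := by
    apply Matrix.IsHermitian.ext
    intro i j
    simpa using hS_symm j i
  have hsymm' : (Matrix.toEuclideanLin S).IsSymmetric :=
    Matrix.isHermitian_iff_isSymmetric.mp hherm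
  set T : selfAdjoint (EuclideanSpace ℝ (Fin n) →L[ℝ] EuclideanSpace ℝ (Fin n)) :=
    hsymm'.toSelfAdjoint with hT_def
  have hT_apply : ∀ (x : EuclideanSpace ℝ (Fin n)) (j : Fin n),
      (T.val x) j = ∑ i, S j i * x i := fun x j => rfl
  have hQ : ∀ x : EuclideanSpace ℝ (Fin n),
      T.val.reApplyInnerSelf x = ∑ j, (∑ i, S j i * x i) * x j := by
    intro x
    rw [ContinuousLinearMap.reApplyInnerSelf_apply]
    simp only [RCLike.re_to_real]
    rw [show (inner ℝ (T.val x) x : ℝ) = ∑ j, (T.val x) j * x j from by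
      simp [PiLp.inner_apply, mul_comm]]
    exact Finset.sum_congr rfl fun j _ => by rw [hT_apply]
  -- maximize the Rayleigh quotient on the unit sphere
  have hsphere_compact : IsCompact (Metric.sphere (0 : EuclideanSpace ℝ (Fin n)) 1) :=
    isCompact_sphere 0 1
  have hsphere_ne : (Metric.sphere (0 : EuclideanSpace ℝ (Fin n)) 1).Nonempty := by
    refine ⟨EuclideanSpace.single i0 1, ?_⟩
    simp [EuclideanSpace.norm_single]
  obtain ⟨v, hv_mem, hv_max⟩ := hsphere_compact.exists_isMaxOn hsphere_ne
    T.val.reApplyInnerSelf_continuous.continuousOn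
  have hv_norm : ‖v‖ = 1 := by simpa using hv_mem
  -- take absolute values
  set w : EuclideanSpace ℝ (Fin n) := WithLp.toLp 2 (fun i => |v i|) with hw_def
  have hw_nonneg : ∀ i, 0 ≤ w i := fun i => abs_nonneg _
  have hw_norm : ‖w‖ = 1 := by
    rw [EuclideanSpace.norm_eq] at hv_norm ⊢
    simpa [hw_def, sq_abs] using hv_norm
  have hw_mem : w ∈ Metric.sphere (0 : EuclideanSpace ℝ (Fin n)) 1 := by
    simp [hw_norm]
  have hw_ne : w ≠ 0 := by
    intro h
    rw [h, norm_zero] at hw_norm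
    norm_num at hw_norm
  -- w is also a maximum point
  have hQw_ge : T.val.reApplyInnerSelf v ≤ T.val.reApplyInnerSelf w := by
    rw [hQ, hQ]
    simp only [Finset.sum_mul, ← Finset.sum_product']
    apply Finset.sum_le_sum
    intro p _
    calc S p.1 p.2 * v p.2 * v p.1 ≤ |S p.1 p.2 * v p.2 * v p.1| := le_abs_self _
      _ = S p.1 p.2 * w p.2 * w p.1 := by
        rw [abs_mul, abs_mul, abs_of_nonneg (hS_nonneg p.1 p.2)]
  have hw_max : IsMaxOn T.val.reApplyInnerSelf
      (Metric.sphere (0 : EuclideanSpace ℝ (Fin n)) 1) w := by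
    intro y hy
    exact le_trans (hv_max hy) hQw_ge
  -- w is an eigenvector
  have hw_max' : IsMaxOn T.val.reApplyInnerSelf
      (Metric.sphere (0 : EuclideanSpace ℝ (Fin n)) ‖w‖) w := by
    rwa [hw_norm]
  have hE := T.prop.hasEigenvector_of_isLocalExtrOn hw_ne (Or.inr hw_max'.localize)
  set ρ : ℝ := T.val.rayleighQuotient w with hρ_def
  have hρ_eq : ρ = T.val.reApplyInnerSelf w := by
    rw [hρ_def, ContinuousLinearMap.rayleighQuotient, hw_norm]
    norm_num
  have heig : ∀ j, ∑ i, S j i * w i = ρ * w j := by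
    intro j
    have h1 := hE.1
    rw [Module.End.mem_eigenspace_iff] at h1
    have := congrFun (congrArg (fun f : EuclideanSpace ℝ (Fin n) => (f : Fin n → ℝ)) h1) j
    simpa [hT_apply] using this
  -- Rayleigh quotient bound: for all y, Q y ≤ ρ * ‖y‖²
  have hRayleigh : ∀ y : EuclideanSpace ℝ (Fin n), y ≠ 0 →
      T.val.reApplyInnerSelf y ≤ ρ * ‖y‖ ^ 2 := by
    intro y hy
    have hny : (0:ℝ) < ‖y‖ := norm_pos_iff.mpr hy
    set u : EuclideanSpace ℝ (Fin n) := ‖y‖⁻¹ • y with hu_def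
    have hu_norm : ‖u‖ = 1 := norm_smul_inv_norm hy
    have hu_mem : u ∈ Metric.sphere (0 : EuclideanSpace ℝ (Fin n)) 1 := by simp [hu_norm]
    have h1 : T.val.reApplyInnerSelf u ≤ ρ := by
      rw [hρ_eq]; exact hw_max hu_mem
    have h2 : y = ‖y‖ • u := by
      rw [hu_def, smul_smul, mul_inv_cancel₀ hny.ne', one_smul]
    have hsmul := T.val.reApplyInnerSelf_smul u (c := (‖y‖ : ℝ))
    rw [← h2] at hsmul
    calc T.val.reApplyInnerSelf y = ‖(‖y‖ : ℝ)‖ ^ 2 * T.val.reApplyInnerSelf u := hsmul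
      _ = ‖y‖ ^ 2 * T.val.reApplyInnerSelf u := by rw [norm_norm]
      _ ≤ ‖y‖ ^ 2 * ρ := by
          apply mul_le_mul_of_nonneg_left h1 (by positivity)
      _ = ρ * ‖y‖ ^ 2 := by ring
  -- ρ ≥ 2
  have hρ_ge : 2 ≤ ρ := by
    push_neg at hinf
    obtain ⟨x, hx0, hxle⟩ := hinf
    set xr : Fin n → ℝ := fun i => (x i : ℝ) with hxr_def
    have hxr0 : ∃ i, xr i ≠ 0 := by
      by_contra h
      push_neg at h
      apply hx0
      funext i
      have h2 : (x i : ℝ) = 0 := h i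
      have h3 : x i = 0 := by exact_mod_cast h2
      simpa using h3
    set y : EuclideanSpace ℝ (Fin n) := WithLp.toLp 2 (fun i => sd i * xr i) with hy_def
    have hy0 : y ≠ 0 := by
      obtain ⟨i, hi⟩ := hxr0
      intro h
      apply hi
      have := congrFun (congrArg (fun f : EuclideanSpace ℝ (Fin n) => (f : Fin n → ℝ)) h) i
      simp only [hy_def] at this
      rcases mul_eq_zero.mp this with h' | h'
      · exact absurd h' (hsd_pos i).ne'
      · exact h'
    have hnormy : ‖y‖ ^ 2 = ∑ i, (d i : ℝ) * xr i ^ 2 := by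
      rw [← real_inner_self_eq_norm_sq]
      rw [show (inner ℝ y y : ℝ) = ∑ i, y i * y i from by rw [PiLp.inner_apply]; simp [sq]]
      apply Finset.sum_congr rfl
      intro i _
      simp only [hy_def]
      rw [show sd i * xr i * (sd i * xr i) = (sd i * sd i) * xr i ^ 2 by ring, hsd_sq]
    have hQA : (∑ i, ∑ j, ((d i : ℝ) * (A i j : ℝ)) * xr i * xr j) ≤ 0 := by
      have : ((∑ i, ∑ j, ((d i * A i j : ℤ) : ℚ) * x i * x j : ℚ) : ℝ) ≤ 0 := by
        exact_mod_cast hxle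
      push_cast at this
      convert this using 2 with i
    -- key computation: Q y = 2 ∑ dᵢ xᵢ² − QA
    have hQy : T.val.reApplyInnerSelf y =
        2 * (∑ i, (d i : ℝ) * xr i ^ 2) -
          ∑ i, ∑ j, ((d i : ℝ) * (A i j : ℝ)) * xr i * xr j := by
      rw [hQ]
      have hterm : ∀ j, (∑ i, S j i * y i) * y j =
          2 * ((d j : ℝ) * xr j ^ 2) - ∑ i, ((d j : ℝ) * (A j i : ℝ)) * xr j * xr i := by
        intro j
        rw [Finset.sum_mul]
        have h1 : ∀ i, S j i * y i * y j =
            (if j = i then ((d j : ℝ) * (A j i : ℝ)) * xr j * xr i else 0)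
              - ((d j : ℝ) * (A j i : ℝ)) * xr j * xr i
              + (if j = i then 0 else 0) := by
          intro i
          by_cases h : j = i
          · subst h
            simp [hS_def, hdiag j]
          · simp only [hS_def, if_neg h, hy_def]
            have hi0 : sd i ≠ 0 := (hsd_pos i).ne'
            have hrw : -(A j i : ℝ) * sd j / sd i * (sd i * xr i) * (sd j * xr j)
                = -((sd j * sd j) * (A j i : ℝ)) * xr i * xr j := by
              field_simp
            rw [hrw, hsd_sq]
            ring
        rw [Finset.sum_congr rfl (fun i _ => h1 i)]
        rw [Finset.sum_add_distrib, Finset.sum_sub_distrib]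
        simp only [Finset.sum_ite_eq, Finset.mem_univ, if_true, Finset.sum_const_zero,
          hdiag j]
        push_cast
        ring
      rw [Finset.sum_congr rfl (fun j _ => hterm j), Finset.sum_sub_distrib,
        ← Finset.mul_sum]
    have h2 : 2 * ‖y‖ ^ 2 ≤ T.val.reApplyInnerSelf y := by
      rw [hQy, hnormy]
      linarith
    have h3 := hRayleigh y hy0
    have hny : (0:ℝ) < ‖y‖ ^ 2 := pow_pos (norm_pos_iff.mpr hy0) 2
    nlinarith
  -- strict positivity of w
  have hρ_pos : (0:ℝ) < ρ := by linarith
  have hzero : ∀ j, w j = 0 → ∀ i, A i j ≠ 0 → w i = 0 := by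
    intro j hj i hij
    by_cases h : i = j
    · rw [h]; exact hj
    · have hsum : ∑ i, S j i * w i = 0 := by rw [heig j, hj, mul_zero]
      have hnn : ∀ k ∈ Finset.univ, 0 ≤ S j k * w k := fun k _ =>
        mul_nonneg (hS_nonneg j k) (hw_nonneg k)
      have := (Finset.sum_eq_zero_iff_of_nonneg hnn).mp hsum i (Finset.mem_univ i)
      have hSpos : 0 < S j i := hS_pos j i (Ne.symm h) (hAzero i j hij)
      rcases mul_eq_zero.mp this with h' | h'
      · exact absurd h' hSpos.ne'
      · exact h'
  have hstep : ∀ a b : Fin n, (SimpleGraph.fromRel (fun i j => A i j ≠ 0)).Adj a b →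
      w a = 0 → w b = 0 := by
    intro a b hab ha
    rw [SimpleGraph.fromRel_adj] at hab
    obtain ⟨hne', hor⟩ := hab
    have hba : A b a ≠ 0 := by
      rcases hor with h' | h'
      · exact hAzero a b h'
      · exact h'
    exact hzero a ha b hba
  have hwalk : ∀ (a b : Fin n) (p : (SimpleGraph.fromRel (fun i j => A i j ≠ 0)).Walk a b),
      w a = 0 → w b = 0 := by
    intro a b p
    induction p with
    | nil => exact id
    | cons hab p ih => intro ha; exact ih (hstep _ _ hab ha)
  have hw_pos : ∀ i, 0 < w i := by
    by_contra h
    push_neg at h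
    obtain ⟨j0, hj0⟩ := h
    have hj0' : w j0 = 0 := le_antisymm hj0 (hw_nonneg j0)
    apply hw_ne
    ext i
    obtain ⟨p⟩ := hind.preconnected j0 i
    exact hwalk j0 i p hj0'
  -- conclusion
  refine ⟨ρ, fun i => sd i * w i, hρ_ge, fun i => mul_pos (hsd_pos i) (hw_pos i), ?_⟩
  intro j
  have h1 : ∀ i, sd j * (S j i * w i) =
      (if i = j then 0 else -(A i j : ℝ) * (sd i * w i)) := by
    intro i
    by_cases h : i = j
    · rw [h]
      have hSd : S j j = 0 := by simp [hS_def]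
      rw [hSd, if_pos rfl]
      ring
    · rw [hS_symm j i]
      simp only [hS_def, if_neg h]
      have hj0 : sd j ≠ 0 := (hsd_pos j).ne'
      field_simp
  have h2 : sd j * (∑ i, S j i * w i) = ∑ i, (if i = j then 0 else -(A i j : ℝ) * (sd i * w i)) := by
    rw [Finset.mul_sum]
    exact Finset.sum_congr rfl (fun i _ => h1 i)
  have h3 : ∑ i, (if i = j then 0 else -(A i j : ℝ) * (sd i * w i))
      = ∑ i ∈ Finset.univ.erase j, -((A i j : ℝ) * (sd i * w i)) := by
    rw [← Finset.sum_erase (a := j) (Finset.univ)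
      (f := fun i => if i = j then (0:ℝ) else -(A i j : ℝ) * (sd i * w i)) (if_pos rfl)]
    apply Finset.sum_congr rfl
    intro i hi
    rw [if_neg (Finset.ne_of_mem_erase hi)]
    ring
  rw [Finset.sum_neg_distrib] at h3
  rw [heig j] at h2
  rw [← h3, ← h2]
  ring
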